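/- Let a < b, κ a real constant, ρ : [a,b] → ℝ continuous, and define the beam action S(u) = ∫ₐᵇ ( κ u''(x)²/2 − ρ(x) u(x) ) dx. For u ∈ C⁴([a,b]) and v ∈ C²([a,b]), the first variation satisfies (d/dε)|_{ε=0} S(u + εv) = ∫ₐᵇ ( κ u''''(x) − ρ(x) ) v(x) dx + [ κ u''(x) v'(x) − κ u'''(x) v(x) ]ₐᵇ. -/

import Mathlib

open Set

/-- `f` is of class `C²` on `s`, with successive derivatives `f1, f2`. -/
def IsC2On (f f1 f2 : ℝ → ℝ) (s : Set ℝ) : Prop :=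
  (∀ x ∈ s, HasDerivWithinAt f (f1 x) s x) ∧
  (∀ x ∈ s, HasDerivWithinAt f1 (f2 x) s x) ∧
  ContinuousOn f2 s

/-- `f` is of class `C⁴` on `s`, with successive derivatives `f1, f2, f3, f4`. -/
def IsC4On (f f1 f2 f3 f4 : ℝ → ℝ) (s : Set ℝ) : Prop :=
  (∀ x ∈ s, HasDerivWithinAt f (f1 x) s x) ∧
  (∀ x ∈ s, HasDerivWithinAt f1 (f2 x) s x) ∧
  (∀ x ∈ s, HasDerivWithinAt f2 (f3 x) s x) ∧
  (∀ x ∈ s, HasDerivWithinAt f3 (f4 x) s x) ∧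
  ContinuousOn f4 s

/-- First variation of the Bernoulli beam action
`S(u) = ∫ₐᵇ (κ u''²/2 − ρ u) dx` at a `C⁴` function `u` in a `C²` direction `v`:
`(d/dε)|₀ S(u + εv) = ∫ₐᵇ (κ u'''' − ρ) v dx + [κ u'' v' − κ u''' v]ₐᵇ`. -/
theorem beam_first_variation
    (a b κ : ℝ) (hab : a < b) (ρ : ℝ → ℝ) (hρ : ContinuousOn ρ (Icc a b))
    (u u1 u2 u3 u4 v v1 v2 : ℝ → ℝ)
    (hu : IsC4On u u1 u2 u3 u4 (Icc a b)) (hv : IsC2On v v1 v2 (Icc a b)) :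
    HasDerivAt
      (fun ε : ℝ => ∫ x in a..b,
        (κ * (u2 x + ε * v2 x) ^ 2 / 2 - ρ x * (u x + ε * v x)))
      ((∫ x in a..b, (κ * u4 x - ρ x) * v x)
        + ((κ * u2 b * v1 b - κ * u3 b * v b)
            - (κ * u2 a * v1 a - κ * u3 a * v a))) 0 := by

  obtain ⟨hu1, hu2, hu3, hu4, hu4c⟩ := hu
  obtain ⟨hv1, hv2, hv2c⟩ := hv
  have hs : uIcc a b = Icc a b := uIcc_of_le hab.le
  have cu : ContinuousOn u (Icc a b) := fun x hx => (hu1 x hx).continuousWithinAt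
  have cu2 : ContinuousOn u2 (Icc a b) := fun x hx => (hu3 x hx).continuousWithinAt
  have cu3 : ContinuousOn u3 (Icc a b) := fun x hx => (hu4 x hx).continuousWithinAt
  have cv : ContinuousOn v (Icc a b) := fun x hx => (hv1 x hx).continuousWithinAt
  have cv1 : ContinuousOn v1 (Icc a b) := fun x hx => (hv2 x hx).continuousWithinAt
  have intgr : ∀ f : ℝ → ℝ, ContinuousOn f (Icc a b) → IntervalIntegrable f MeasureTheory.volume a b := by
    intro f hf
    exact (hs ▸ hf).intervalIntegrable
  set C0 : ℝ := ∫ x in a..b, (κ * u2 x ^ 2 / 2 - ρ x * u x) with hC0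
  set C1 : ℝ := ∫ x in a..b, (κ * u2 x * v2 x - ρ x * v x) with hC1
  set C2 : ℝ := ∫ x in a..b, (κ * v2 x ^ 2 / 2) with hC2
  have i0 : IntervalIntegrable (fun x => κ * u2 x ^ 2 / 2 - ρ x * u x) MeasureTheory.volume a b :=
    intgr _ (((cu2.pow 2).const_smul κ |>.div_const 2).sub (hρ.mul cu))
  have i1 : IntervalIntegrable (fun x => κ * u2 x * v2 x - ρ x * v x) MeasureTheory.volume a b :=
    intgr _ (((cu2.const_smul κ).mul hv2c).sub (hρ.mul cv))
  have i2 : IntervalIntegrable (fun x => κ * v2 x ^ 2 / 2) MeasureTheory.volume a b :=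
    intgr _ ((hv2c.pow 2).const_smul κ |>.div_const 2)
  have key : ∀ ε : ℝ,
      (∫ x in a..b, (κ * (u2 x + ε * v2 x) ^ 2 / 2 - ρ x * (u x + ε * v x)))
        = C0 + ε * C1 + ε ^ 2 * C2 := by
    intro ε
    have hfun : (fun x => κ * (u2 x + ε * v2 x) ^ 2 / 2 - ρ x * (u x + ε * v x))
        = fun x => (κ * u2 x ^ 2 / 2 - ρ x * u x)
            + ε * (κ * u2 x * v2 x - ρ x * v x) + ε ^ 2 * (κ * v2 x ^ 2 / 2) := by
      funext x; ring
    rw [hfun, intervalIntegral.integral_add (i0.add (i1.const_mul ε)) (i2.const_mul (ε ^ 2)),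
      intervalIntegral.integral_add i0 (i1.const_mul ε),
      intervalIntegral.integral_const_mul, intervalIntegral.integral_const_mul]
  -- integration by parts via FTC
  have hGderiv : ∀ x ∈ Icc a b,
      HasDerivWithinAt (fun x => κ * u2 x * v1 x - κ * u3 x * v x)
        (κ * u2 x * v2 x - κ * u4 x * v x) (Icc a b) x := by
    intro x hx
    have h := (((hu3 x hx).const_mul κ).mul (hv2 x hx)).sub
      (((hu4 x hx).const_mul κ).mul (hv1 x hx))
    refine h.congr_deriv ?_
    ring
  have hGcont : ContinuousOn (fun x => κ * u2 x * v1 x - κ * u3 x * v x) (Icc a b) :=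
    fun x hx => ((hGderiv x hx).continuousWithinAt)
  have igprime : IntervalIntegrable (fun x => κ * u2 x * v2 x - κ * u4 x * v x)
      MeasureTheory.volume a b :=
    intgr _ (((cu2.const_smul κ).mul hv2c).sub ((hu4c.const_smul κ).mul cv))
  have ftc : (∫ x in a..b, (κ * u2 x * v2 x - κ * u4 x * v x))
      = (κ * u2 b * v1 b - κ * u3 b * v b) - (κ * u2 a * v1 a - κ * u3 a * v a) := by
    apply intervalIntegral.integral_eq_sub_of_hasDeriv_right_of_le hab.le hGcont _ igprime
    intro x hx
    exact (((hGderiv x (Ioo_subset_Icc_self hx)).hasDerivAt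
      (Icc_mem_nhds hx.1 hx.2)).hasDerivWithinAt)
  have i3 : IntervalIntegrable (fun x => (κ * u4 x - ρ x) * v x) MeasureTheory.volume a b :=
    intgr _ (((hu4c.const_smul κ).sub hρ).mul cv)
  have hC1eq : C1 = (∫ x in a..b, (κ * u4 x - ρ x) * v x)
      + ((κ * u2 b * v1 b - κ * u3 b * v b) - (κ * u2 a * v1 a - κ * u3 a * v a)) := by
    rw [hC1, ← ftc, ← intervalIntegral.integral_add i3 igprime]
    congr 1
    funext x
    ring
  have hD : HasDerivAt (fun ε : ℝ => C0 + ε * C1 + ε ^ 2 * C2) C1 0 := by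
    have h1 : HasDerivAt (fun ε : ℝ => ε * C1) C1 0 := by
      simpa using (hasDerivAt_id (0 : ℝ)).mul_const C1
    have h2 : HasDerivAt (fun ε : ℝ => ε ^ 2 * C2) 0 0 := by
      simpa using (hasDerivAt_pow 2 (0 : ℝ)).mul_const C2
    exact (((hasDerivAt_const (0 : ℝ) C0).add h1).add h2).congr_deriv (by ring)
  rw [← hC1eq]
  simp only [key]
  exact hD
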